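/- Let k be a field, S = k[x_0, …, x_n] standardly graded, and M a finitely generated nonnegatively graded S-module. Then there exists a polynomial p ∈ ℚ[m] and a bound N such that dim_k M_j = p(j) for all j ≥ N (the Hilbert polynomial of M). -/

import Mathlib

set_option synthInstance.maxHeartbeats 1000000
set_option maxHeartbeats 4000000

open Polynomial

private lemma hilb_delta_natDegree (d : ℕ) :
    ((X + 1 : Polynomial ℚ) ^ (d + 1) - X ^ (d + 1)).natDegree = d ∧
    ((X + 1 : Polynomial ℚ) ^ (d + 1) - X ^ (d + 1)).coeff d = (d + 1 : ℚ) := by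
  have hc : ∀ m, ((X + 1 : Polynomial ℚ) ^ (d + 1) - X ^ (d + 1)).coeff m
      = (Nat.choose (d+1) m : ℚ) - if m = d + 1 then 1 else 0 := by
    intro m
    simp [coeff_X_add_one_pow, coeff_X_pow]
  constructor
  · apply le_antisymm
    · apply natDegree_le_iff_coeff_eq_zero.mpr
      intro m hm
      rw [hc]
      rcases eq_or_lt_of_le (Nat.succ_le_of_lt hm) with h | h
      · simp [← h]
      · rw [Nat.choose_eq_zero_of_lt h]; simp [Nat.ne_of_gt h]
    · apply le_natDegree_of_ne_zero
      rw [hc]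
      simp [Nat.succ_ne_self d, Nat.choose_succ_self_right]
      positivity
  · rw [hc]
    simp [Nat.choose_succ_self_right]

private lemma hilb_delta_surj (p : Polynomial ℚ) :
    ∃ q : Polynomial ℚ, q.comp (X + 1) - q = p := by
  generalize hn : p.natDegree = n
  induction n using Nat.strong_induction_on generalizing p with
  | _ n ih =>
    rcases eq_or_ne p 0 with rfl | hp0
    · exact ⟨0, by simp⟩
    rcases Nat.eq_zero_or_pos n with rfl | hn0
    · refine ⟨C (p.coeff 0) * X, ?_⟩
      have h := eq_C_of_natDegree_eq_zero hn
      rw [mul_comp, C_comp, X_comp]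
      nth_rewrite 3 [h]
      ring
    · obtain ⟨d, rfl⟩ : ∃ d, n = d + 1 := ⟨n - 1, by omega⟩
      set a : ℚ := p.leadingCoeff / (d + 2)
      set q₁ : Polynomial ℚ := C a * X ^ (d + 2)
      have hδ : q₁.comp (X + 1) - q₁ = C a * ((X + 1) ^ (d + 2) - X ^ (d + 2)) := by
        simp [q₁, mul_sub]
      obtain ⟨hdeg, hcoeff⟩ := hilb_delta_natDegree (d + 1)
      have hlc : p.leadingCoeff ≠ 0 := leadingCoeff_ne_zero.mpr hp0
      have hd2 : ((d : ℚ) + 2) ≠ 0 := by positivity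
      have ha : a ≠ 0 := div_ne_zero hlc hd2
      have hq1deg : (q₁.comp (X + 1) - q₁).natDegree = d + 1 := by
        rw [hδ, natDegree_C_mul ha]
        exact hdeg
      have hq1lead : (q₁.comp (X + 1) - q₁).leadingCoeff = p.leadingCoeff := by
        rw [leadingCoeff, hq1deg, hδ, coeff_C_mul, hcoeff]
        rw [show ((d+1 : ℕ) : ℚ) + 1 = (d : ℚ) + 2 by push_cast; ring]
        exact div_mul_cancel₀ _ hd2
      set r : Polynomial ℚ := p - (q₁.comp (X + 1) - q₁) with hr
      rcases eq_or_ne r 0 with hr0 | hr0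
      · exact ⟨q₁, by rw [← sub_eq_zero]; rw [sub_eq_zero] at hr0 ⊢; exact hr0.symm⟩
      · have h1 : (q₁.comp (X + 1) - q₁) ≠ 0 := by
          intro h; rw [h] at hq1deg; simp at hq1deg
        have hdeg_eq : p.degree = (q₁.comp (X + 1) - q₁).degree := by
          rw [degree_eq_natDegree hp0, degree_eq_natDegree h1, hn, hq1deg]
        have hlt := degree_sub_lt hdeg_eq hp0 hq1lead.symm
        rw [degree_eq_natDegree hp0, hn] at hlt
        have hrd : r.natDegree < d + 1 :=
          (natDegree_lt_iff_degree_lt hr0).mpr hlt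
        obtain ⟨q', hq'⟩ := ih r.natDegree hrd r rfl
        refine ⟨q' + q₁, ?_⟩
        rw [add_comp,
          show q'.comp (X+1) + q₁.comp (X+1) - (q' + q₁)
            = (q'.comp (X+1) - q') + (q₁.comp (X+1) - q₁) from by ring, hq', hr]
        ring

private lemma hilb_sum (f : ℕ → ℚ) (p : Polynomial ℚ) (N : ℕ)
    (h : ∀ j ≥ N, f (j+1) - f j = p.eval (j:ℚ)) :
    ∃ (q : Polynomial ℚ) (N' : ℕ), ∀ j ≥ N', f j = q.eval (j:ℚ) := by
  obtain ⟨q, hq⟩ := hilb_delta_surj p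
  refine ⟨q + C (f N - q.eval (N:ℚ)), N, ?_⟩
  intro j hj
  induction j, hj using Nat.le_induction with
  | base => simp
  | succ j hj ih =>
    have h1 := h j hj
    have h2 : q.eval ((j:ℚ)+1) - q.eval (j:ℚ) = p.eval (j:ℚ) := by
      rw [← hq]; simp [eval_comp]
    push_cast
    push_cast at ih
    simp only [eval_add, eval_C] at ih ⊢
    linarith


section Internal

variable {k M : Type*} [Field k] [AddCommGroup M] [Module k M]
variable (ℳ : ℕ → Submodule k M)

private lemma internal_decomp (hM : DirectSum.IsInternal ℳ) (m : M) :
    ∃ (s : Finset ℕ) (c : ℕ → M), (∀ t, c t ∈ ℳ t) ∧ (∀ t ∉ s, c t = 0) ∧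
      m = ∑ t ∈ s, c t := by
  classical
  obtain ⟨D, rfl⟩ := hM.2 m
  refine ⟨D.support, fun t => ↑(D t), fun t => (D t).2, fun t ht => by
    dsimp only; rw [DFinsupp.notMem_support_iff.mp ht]; rfl, ?_⟩
  rw [DirectSum.coeAddMonoidHom_eq_dfinsuppSum]
  rfl

private lemma internal_unique (hM : DirectSum.IsInternal ℳ) (g : ℕ → M) (s : Finset ℕ)
    (hg : ∀ t, g t ∈ ℳ t) (hs : ∀ t ∉ s, g t = 0) (hsum : ∑ t ∈ s, g t = 0) :
    ∀ t, g t = 0 := by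
  classical
  set D : DirectSum ℕ (fun t => ℳ t) := ∑ t ∈ s, DirectSum.of (fun t => (ℳ t : Type _)) t ⟨g t, hg t⟩ with hD
  have hDc : DirectSum.coeAddMonoidHom ℳ D = 0 := by
    rw [hD, map_sum]
    simpa [DirectSum.coeAddMonoidHom_of] using hsum
  have hD0 : D = 0 := hM.1 (by rw [hDc, (DirectSum.coeAddMonoidHom ℳ).map_zero])
  intro t
  by_cases ht : t ∈ s
  · have h1 : D t = ⟨g t, hg t⟩ := by
      rw [hD, DFinsupp.finset_sum_apply]
      rw [Finset.sum_eq_single t]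
      · exact DirectSum.of_eq_same t _
      · intro b _ hb; exact DirectSum.of_eq_of_ne _ _ _ hb.symm
      · intro h; exact absurd ht h
    have : (⟨g t, hg t⟩ : ℳ t) = 0 := by rw [← h1, hD0]; rfl
    exact congrArg Subtype.val this
  · exact hs t ht

private lemma internal_component (hM : DirectSum.IsInternal ℳ) (g : ℕ → M) (s : Finset ℕ)
    (hg : ∀ t, g t ∈ ℳ t) (hs : ∀ t ∉ s, g t = 0) {j : ℕ} {m : M} (hm : m ∈ ℳ j)
    (hsum : ∑ t ∈ s, g t = m) : g j = m := by
  classical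
  set g' : ℕ → M := fun t => g t - if t = j then m else 0 with hg'
  have h0 : ∀ t, g' t = 0 := by
    apply internal_unique ℳ hM g' (insert j s)
    · intro t
      by_cases h : t = j
      · subst h; simpa [g'] using sub_mem (hg t) hm
      · simpa [g', h] using hg t
    · intro t ht
      simp only [Finset.mem_insert, not_or] at ht
      simp [g', ht.1, hs t ht.2]
    · by_cases hj : j ∈ s
      · rw [Finset.insert_eq_self.mpr hj]
        simp only [g', Finset.sum_sub_distrib, hsum]
        rw [Finset.sum_ite_eq' s j (fun _ => m)]
        simp [hj]
      · rw [Finset.sum_insert hj]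
        simp only [g', Finset.sum_sub_distrib, hsum]
        rw [Finset.sum_ite_eq' s j (fun _ => m)]
        simp [hj, hs j hj]
  have := h0 j
  simp only [g', if_pos rfl] at this
  exact sub_eq_zero.mp this

end Internal


section Internal
variable {k M : Type*} [Field k] [AddCommGroup M] [Module k M]
variable (ℳ : ℕ → Submodule k M)

private lemma internal_decomp_iSup (P : ℕ → Prop) (m : M)
    (hm : m ∈ ⨆ i, ⨆ _ : P i, ℳ i) :
    ∃ (s : Finset ℕ) (c : ℕ → M), (∀ t, c t ∈ ℳ t) ∧ (∀ t ∉ s, c t = 0) ∧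
      (∀ t, ¬ P t → c t = 0) ∧ m = ∑ t ∈ s, c t := by
  classical
  induction hm using Submodule.iSup_induction' with
  | mem i y hy =>
    by_cases hP : P i
    · rw [iSup_pos hP] at hy
      refine ⟨{i}, fun t => if t = i then y else 0, ?_, ?_, ?_, ?_⟩
      · intro t; dsimp only; split_ifs with h
        · subst h; exact hy
        · exact Submodule.zero_mem _
      · intro t ht; dsimp only; rw [if_neg (by simpa using ht)]
      · intro t hPt; dsimp only
        rw [if_neg (fun h : t = i => hPt (by rw [h]; exact hP))]
      · simp
    · rw [iSup_neg hP] at hy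
      rw [Submodule.mem_bot] at hy
      subst hy
      exact ⟨∅, fun _ => 0, fun t => Submodule.zero_mem _, fun _ _ => rfl,
        fun _ _ => rfl, by simp⟩
  | zero =>
    exact ⟨∅, fun _ => 0, fun t => Submodule.zero_mem _, fun _ _ => rfl, fun _ _ => rfl, by simp⟩
  | add m₁ m₂ _ _ ih₁ ih₂ =>
    obtain ⟨s₁, c₁, hc₁, hs₁, hP₁, rfl⟩ := ih₁
    obtain ⟨s₂, c₂, hc₂, hs₂, hP₂, rfl⟩ := ih₂
    refine ⟨s₁ ∪ s₂, fun t => c₁ t + c₂ t,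
      fun t => Submodule.add_mem _ (hc₁ t) (hc₂ t),
      fun t ht => by
        rw [Finset.mem_union, not_or] at ht
        dsimp only
        rw [hs₁ t ht.1, hs₂ t ht.2, add_zero],
      fun t ht => by dsimp only; rw [hP₁ t ht, hP₂ t ht, add_zero], ?_⟩
    rw [Finset.sum_add_distrib]
    congr 1
    · exact Finset.sum_subset Finset.subset_union_left (fun t _ ht => hs₁ t ht)
    · exact Finset.sum_subset Finset.subset_union_right (fun t _ ht => hs₂ t ht)

end Internal


open MvPolynomial

private lemma hilb_fg_over_R (k : Type*) [Field k] (n : ℕ) (N : Type*) [AddCommGroup N]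
    [Module (MvPolynomial (Fin (n+1)) k) N] [Module k N]
    [IsScalarTower k (MvPolynomial (Fin (n+1)) k) N]
    [ModR : Module (MvPolynomial (Fin n) k) N]
    (hcomp : ∀ (r : MvPolynomial (Fin n) k) (v : N),
      r • v = (rename Fin.succ r : MvPolynomial (Fin (n+1)) k) • v)
    [Module.Finite (MvPolynomial (Fin (n+1)) k) N]
    (hx : ∀ v : N, (X 0 : MvPolynomial (Fin (n+1)) k) • v = 0) :
    Module.Finite (MvPolynomial (Fin n) k) N := by
  classical
  obtain ⟨G, hG⟩ := Module.Finite.fg_top (R := MvPolynomial (Fin (n+1)) k) (M := N)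
  set V : Submodule (MvPolynomial (Fin n) k) N := Submodule.span _ (G : Set N) with hV
  have key : ∀ (s : MvPolynomial (Fin (n+1)) k) (v : N), v ∈ V → s • v ∈ V := by
    intro s
    induction s using MvPolynomial.induction_on with
    | C a =>
      intro v hv
      have h1 : (C a : MvPolynomial (Fin (n+1)) k) • v
          = (C a : MvPolynomial (Fin n) k) • v := by
        rw [hcomp, rename_C]
      rw [h1]
      exact V.smul_mem _ hv
    | add p q hp hq =>
      intro v hv
      rw [add_smul]
      exact V.add_mem (hp v hv) (hq v hv)
    | mul_X p i hp =>
      intro v hv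
      rw [mul_smul]
      rcases Fin.eq_zero_or_eq_succ i with h0 | ⟨i', rfl⟩
      · rw [h0, hx v, smul_zero]
        exact V.zero_mem
      · have h1 : (X (Fin.succ i') : MvPolynomial (Fin (n+1)) k) • v
            = (X i' : MvPolynomial (Fin n) k) • v := by rw [hcomp, rename_X]
        rw [h1]
        exact hp _ (V.smul_mem _ hv)
  have htop : ∀ v : N, v ∈ V := by
    intro v
    have hv : v ∈ Submodule.span (MvPolynomial (Fin (n+1)) k) (G : Set N) := by
      rw [hG]; trivial
    induction hv using Submodule.span_induction with
    | mem v hv => exact Submodule.subset_span hv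
    | zero => exact V.zero_mem
    | add _ _ _ _ h1 h2 => exact V.add_mem h1 h2
    | smul s v _ hv => exact key s v hv
  exact ⟨⟨G, le_antisymm le_top (fun v _ => htop v)⟩⟩


open MvPolynomial

section PieceFD

variable {k : Type*} [Field k] {n : ℕ} {M : Type*} [AddCommGroup M]
  [Module (MvPolynomial (Fin n) k) M] [Module k M]
  [IsScalarTower k (MvPolynomial (Fin n) k) M]

local notation "S" => MvPolynomial (Fin n) k

-- the k-linear "multiply into f" map
private noncomputable def hilb_smulMap (f : M) : S →ₗ[k] M where
  toFun s := s • f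
  map_add' s t := add_smul s t f
  map_smul' a s := smul_assoc a s f

-- needs internal lemmas from p2; copy assumed in final file
private lemma internal_decomp' : True := trivial

private lemma hilb_homog_gens (ℳ : ℕ → Submodule k M) (hM : DirectSum.IsInternal ℳ)
    [Module.Finite S M] :
    ∃ (E : Finset M) (deg : M → ℕ), (∀ u ∈ E, u ∈ ℳ (deg u)) ∧
      Submodule.span S (E : Set M) = ⊤ := by
  classical
  obtain ⟨G, hG⟩ := Module.Finite.fg_top (R := S) (M := M)
  choose sg cg hmem hsupp hsum using fun g : M => internal_decomp ℳ hM g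
  refine ⟨G.biUnion (fun g => (sg g).image (cg g)),
    fun u => if h : ∃ t, u ∈ ℳ t then h.choose else 0, ?_, ?_⟩
  · intro u hu
    simp only [Finset.mem_biUnion, Finset.mem_image] at hu
    obtain ⟨g, _, t, _, rfl⟩ := hu
    have h : ∃ t', cg g t ∈ ℳ t' := ⟨t, hmem g t⟩
    dsimp only
    rw [dif_pos h]
    exact h.choose_spec
  · rw [← top_le_iff, ← hG, Submodule.span_le]
    intro g hg
    rw [hsum g]
    refine Submodule.sum_mem _ (fun t ht => Submodule.subset_span ?_)
    simp only [Finset.coe_biUnion, Set.mem_iUnion, Finset.coe_image, Set.mem_image]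
    exact ⟨g, hg, by simpa using ⟨t, ht, rfl⟩⟩

private lemma hilb_piece_fd (ℳ : ℕ → Submodule k M) (hM : DirectSum.IsInternal ℳ)
    (hsmul : ∀ (i j : ℕ) (s : S) (m : M), s.IsHomogeneous i → m ∈ ℳ j → s • m ∈ ℳ (i + j))
    [Module.Finite S M] (j : ℕ) : FiniteDimensional k (ℳ j) := by
  classical
  obtain ⟨E, deg, hE, hspan⟩ := hilb_homog_gens (n := n) ℳ hM
  set E' : Finset M := E.filter (fun u => deg u ≤ j) with hE'
  set W : Submodule k M :=
    ⨆ (u : E'), Submodule.map (hilb_smulMap (u : M))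
      (homogeneousSubmodule (Fin n) k (j - deg (u : M))) with hW
  haveI hWfd : FiniteDimensional k W := by
    haveI : ∀ u : E', FiniteDimensional k
        (Submodule.map (hilb_smulMap (u : M))
          (homogeneousSubmodule (Fin n) k (j - deg (u : M)))) := by
      intro u
      haveI : FiniteDimensional k
          (homogeneousSubmodule (Fin n) k (j - deg (u : M))) := by
        apply Submodule.finiteDimensional_of_le
          (S₂ := restrictTotalDegree (Fin n) k (j - deg (u : M)))
        intro p hp
        rw [mem_restrictTotalDegree]
        exact ((mem_homogeneousSubmodule _ _).mp hp).totalDegree_le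
      infer_instance
    infer_instance
  suffices hle : ℳ j ≤ W by
    exact Submodule.finiteDimensional_of_le hle
  intro m hm
  have hm' : m ∈ Submodule.span S (E : Set M) := by rw [hspan]; trivial
  obtain ⟨s, -, hs⟩ := Submodule.mem_span_finset.mp hm'
  set B : ℕ := (E.sup (fun u => (s u).totalDegree + deg u)) + 1 with hB
  set g : ℕ → M := fun t => ∑ u ∈ E,
    if deg u ≤ t then (homogeneousComponent (t - deg u) (s u)) • u else 0 with hg
  have hgmem : ∀ t, g t ∈ ℳ t := by
    intro t
    refine Submodule.sum_mem _ (fun u hu => ?_)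
    split_ifs with h
    · have := hsmul (t - deg u) (deg u) _ u
        (homogeneousComponent_isHomogeneous (t - deg u) (s u)) (hE u hu)
      rwa [Nat.sub_add_cancel h] at this
    · exact Submodule.zero_mem _
  have hgsupp : ∀ t ∉ Finset.range B, g t = 0 := by
    intro t ht
    rw [Finset.mem_range, not_lt] at ht
    refine Finset.sum_eq_zero (fun u hu => ?_)
    split_ifs with h
    · rw [homogeneousComponent_eq_zero, zero_smul]
      have := Finset.le_sup (f := fun u => (s u).totalDegree + deg u) hu
      omega
    · rfl
  have hgsum : ∑ t ∈ Finset.range B, g t = m := by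
    rw [hg, Finset.sum_comm]
    rw [← hs]
    refine Finset.sum_congr rfl (fun u hu => ?_)
    have hfilter : (Finset.range B).filter (fun t => deg u ≤ t) = Finset.Ico (deg u) B := by
      ext t; simp [Finset.mem_Ico]; omega
    rw [← Finset.sum_filter, hfilter, Finset.sum_Ico_eq_sum_range]
    have hBu : (s u).totalDegree + 1 ≤ B - deg u := by
      have := Finset.le_sup (f := fun u => (s u).totalDegree + deg u) hu
      omega
    have : ∀ i ∈ Finset.range (B - deg u),
        (homogeneousComponent (deg u + i - deg u) (s u)) • u
          = (homogeneousComponent i (s u)) • u := by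
      intro i _
      rw [Nat.add_sub_cancel_left]
    rw [Finset.sum_congr rfl this, ← Finset.sum_smul]
    congr 1
    rw [← Finset.sum_subset (Finset.range_subset_range.mpr hBu)
      (fun t _ htn => by
        rw [homogeneousComponent_eq_zero]
        rw [Finset.mem_range, not_lt] at htn
        omega)]
    exact sum_homogeneousComponent (s u)
  have hcomp := internal_component ℳ hM g (Finset.range B) hgmem hgsupp hm hgsum
  rw [← hcomp]
  refine Submodule.sum_mem _ (fun u hu => ?_)
  split_ifs with h
  · have hu' : u ∈ E' := by rw [hE', Finset.mem_filter]; exact ⟨hu, h⟩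
    refine Submodule.mem_iSup_of_mem ⟨u, hu'⟩ ?_
    exact Submodule.mem_map_of_mem (by
      rw [mem_homogeneousSubmodule]
      exact homogeneousComponent_isHomogeneous _ _)
  · exact Submodule.zero_mem _

end PieceFD

universe u v

open MvPolynomial

private lemma hilb_aux (k : Type v) [Field k] : ∀ (n : ℕ) (M : Type u) [AddCommGroup M]
    [Module (MvPolynomial (Fin n) k) M] [Module k M]
    [IsScalarTower k (MvPolynomial (Fin n) k) M]
    [Module.Finite (MvPolynomial (Fin n) k) M]
    (ℳ : ℕ → Submodule k M), DirectSum.IsInternal ℳ →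
    (∀ (i j : ℕ) (s : MvPolynomial (Fin n) k) (m : M),
      s.IsHomogeneous i → m ∈ ℳ j → s • m ∈ ℳ (i + j)) →
    ∃ (p : Polynomial ℚ) (N : ℕ), ∀ j ≥ N,
      (Module.finrank k (ℳ j) : ℚ) = Polynomial.eval (j : ℚ) p := by
  intro n
  induction n with
  | zero =>
    intro M _ _ _ _ _ ℳ hM hsmul
    haveI : Module.Finite k (MvPolynomial (Fin 0) k) :=
      Module.Finite.equiv (MvPolynomial.isEmptyAlgEquiv k (Fin 0)).symm.toLinearEquiv
    haveI : Module.Finite k M := Module.Finite.trans (MvPolynomial (Fin 0) k) M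
    have hfin : {j | ℳ j ≠ ⊥}.Finite :=
      Submodule.finite_ne_bot_of_iSupIndep hM.submodule_iSupIndep
    obtain ⟨N, hN⟩ := hfin.bddAbove
    refine ⟨0, N + 1, fun j hj => ?_⟩
    have hbot : ℳ j = ⊥ := by
      by_contra h
      have := hN (show j ∈ {j | ℳ j ≠ ⊥} from h)
      omega
    rw [hbot]
    simp
  | succ n IH =>
    intro M _ _ _ _ _ ℳ hM hsmul
    classical
    haveI hfd : ∀ j, FiniteDimensional k (ℳ j) := hilb_piece_fd ℳ hM hsmul
    set x : MvPolynomial (Fin (n+1)) k := X 0 with hxdef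
    set T : M →ₗ[MvPolynomial (Fin (n+1)) k] M := x • LinearMap.id with hT
    have hTapp : ∀ m : M, T m = x • m := fun m => rfl
    set K : Submodule (MvPolynomial (Fin (n+1)) k) M := LinearMap.ker T with hKdef
    set Q : Submodule (MvPolynomial (Fin (n+1)) k) M := LinearMap.range T with hQdef
    -- degree-shift of smul by x
    have hxmem : ∀ (j : ℕ) (m : M), m ∈ ℳ j → x • m ∈ ℳ (j + 1) := by
      intro j m hm
      have := hsmul 1 j x m (isHomogeneous_X k (0 : Fin (n+1))) hm
      rwa [add_comm 1 j] at this
    ---------------------------------------------------------------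
    -- the kernel module K
    ---------------------------------------------------------------
    letI : Module (MvPolynomial (Fin n) k) K :=
      Module.compHom K (rename (Fin.succ) : MvPolynomial (Fin n) k →ₐ[k] _).toRingHom
    have hKsmul : ∀ (r : MvPolynomial (Fin n) k) (v : K),
        r • v = (rename Fin.succ r : MvPolynomial (Fin (n+1)) k) • v :=
      fun r v => rfl
    have hKsmulc : ∀ (r : MvPolynomial (Fin n) k) (v : K),
        ((r • v : K) : M) = (rename Fin.succ r : MvPolynomial (Fin (n+1)) k) • (v : M) :=
      fun r v => rfl
    letI : IsScalarTower k (MvPolynomial (Fin n) k) K := by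
      constructor
      intro a r v
      show (rename Fin.succ (a • r) : MvPolynomial (Fin (n+1)) k) • v
        = a • ((rename Fin.succ r : MvPolynomial (Fin (n+1)) k) • v)
      rw [map_smul, smul_assoc]
    haveI : Module.Finite (MvPolynomial (Fin (n+1)) k) K :=
      Module.Finite.iff_fg.mpr (IsNoetherian.noetherian K)
    have hxK : ∀ v : K, x • v = 0 := by
      intro v
      apply Subtype.ext
      rw [Submodule.coe_smul, Submodule.coe_zero]
      exact v.2
    haveI : Module.Finite (MvPolynomial (Fin n) k) K :=
      hilb_fg_over_R k n K hKsmul hxK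
    set ι : K →ₗ[k] M := (K.subtype).restrictScalars k with hι
    have hιinj : Function.Injective ι := Subtype.val_injective
    set 𝒦 : ℕ → Submodule k K := fun j => (ℳ j).comap ι with h𝒦
    have h𝒦mem : ∀ (j : ℕ) (v : K), v ∈ 𝒦 j ↔ (v : M) ∈ ℳ j := fun j v => Iff.rfl
    -- K is internally graded
    have hMind := hM.submodule_iSupIndep
    have hKint : DirectSum.IsInternal 𝒦 := by
      rw [DirectSum.isInternal_submodule_iff_iSupIndep_and_iSup_eq_top]
      constructor
      · intro j
        rw [disjoint_iff_inf_le]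
        rintro v ⟨hv1, hv2⟩
        have h2 : ι v ∈ ⨆ i, ⨆ _ : i ≠ j, ℳ i := by
          have hmap : Submodule.map ι (⨆ i, ⨆ _ : i ≠ j, 𝒦 i)
              ≤ ⨆ i, ⨆ _ : i ≠ j, ℳ i := by
            rw [Submodule.map_iSup]
            refine iSup_mono (fun i => ?_)
            rw [Submodule.map_iSup]
            exact iSup_mono (fun _ => Submodule.map_comap_le _ _)
          exact hmap ⟨v, hv2, rfl⟩
        have h3 : ι v = 0 := (disjoint_iff_inf_le.mp (hMind j)) ⟨hv1, h2⟩
        rw [Submodule.mem_bot]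
        exact hιinj (by rw [h3, map_zero])
      · rw [eq_top_iff]
        intro v _
        obtain ⟨s, c, hc, hcs, hcsum⟩ := internal_decomp ℳ hM (v : M)
        -- each component of v lies in K
        have hcK : ∀ t, c t ∈ K := by
          have h0 : ∀ t, (fun t => Nat.rec 0 (fun t' _ => x • c t') t : ℕ → M) t = 0 := by
            apply internal_unique ℳ hM _ (s.image Nat.succ)
            · intro t
              cases t with
              | zero => exact Submodule.zero_mem _
              | succ t' => exact hxmem t' _ (hc t')
            · intro t ht
              cases t with
              | zero => rfl
              | succ t' =>
                have : t' ∉ s := fun h => ht (Finset.mem_image_of_mem _ h)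
                show x • c t' = 0
                rw [hcs t' this, smul_zero]
            · rw [Finset.sum_image (fun a _ b _ h => Nat.succ_injective h)]
              show ∑ t ∈ s, x • c t = 0
              rw [← Finset.smul_sum, ← hcsum]
              exact v.2
          intro t
          show T (c t) = 0
          rw [hTapp]
          exact h0 (t + 1)
        have : v = ∑ t ∈ s, (⟨c t, hcK t⟩ : K) := by
          apply Subtype.ext
          rw [AddSubmonoidClass.coe_finset_sum]
          exact hcsum
        rw [this]
        exact Submodule.sum_mem _ (fun t _ =>
          Submodule.mem_iSup_of_mem t ((h𝒦mem t _).mpr (hc t)))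
    have hsmulK : ∀ (i j : ℕ) (r : MvPolynomial (Fin n) k) (v : K),
        r.IsHomogeneous i → v ∈ 𝒦 j → r • v ∈ 𝒦 (i + j) := by
      intro i j r v hr hv
      rw [h𝒦mem, hKsmulc]
      exact hsmul i j _ _ (hr.rename_isHomogeneous) ((h𝒦mem j v).mp hv)
    obtain ⟨pK, NK, hpK⟩ := IH K 𝒦 hKint hsmulK
    ---------------------------------------------------------------
    -- the cokernel module C = M ⧸ Q
    ---------------------------------------------------------------
    letI : Module (MvPolynomial (Fin n) k) (M ⧸ Q) :=
      Module.compHom (M ⧸ Q) (rename (Fin.succ) : MvPolynomial (Fin n) k →ₐ[k] _).toRingHom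
    have hCsmul : ∀ (r : MvPolynomial (Fin n) k) (v : M ⧸ Q),
        r • v = (rename Fin.succ r : MvPolynomial (Fin (n+1)) k) • v := fun r v => rfl
    letI : IsScalarTower k (MvPolynomial (Fin n) k) (M ⧸ Q) := by
      constructor
      intro a r v
      show (rename Fin.succ (a • r) : MvPolynomial (Fin (n+1)) k) • v
        = a • ((rename Fin.succ r : MvPolynomial (Fin (n+1)) k) • v)
      rw [map_smul, smul_assoc]
    haveI : Module.Finite (MvPolynomial (Fin (n+1)) k) (M ⧸ Q) :=
      Module.Finite.of_surjective Q.mkQ (Submodule.mkQ_surjective Q)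
    have hxC : ∀ v : M ⧸ Q, x • v = 0 := by
      intro v
      obtain ⟨m, rfl⟩ := Submodule.mkQ_surjective Q v
      show x • Submodule.Quotient.mk m = 0
      rw [← Submodule.Quotient.mk_smul]
      exact (Submodule.Quotient.mk_eq_zero Q).mpr ⟨m, rfl⟩
    haveI : Module.Finite (MvPolynomial (Fin n) k) (M ⧸ Q) :=
      hilb_fg_over_R k n (M ⧸ Q) hCsmul hxC
    set ρ0 : M →ₗ[k] M ⧸ Q := (Q.mkQ).restrictScalars k with hρ0
    have hρ0surj : Function.Surjective ρ0 := Submodule.mkQ_surjective Q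
    have hρ0ker : ∀ m : M, ρ0 m = 0 ↔ m ∈ Q := by
      intro m
      rw [hρ0]
      exact Submodule.Quotient.mk_eq_zero Q
    set 𝒞 : ℕ → Submodule k (M ⧸ Q) := fun j => (ℳ j).map ρ0 with h𝒞
    -- key fact: a homogeneous element of Q (mod lower pieces) is x • (one degree lower)
    have hQpiece : ∀ (j : ℕ) (m₀ w : M), m₀ ∈ ℳ j → w ∈ (⨆ i, ⨆ _ : i ≠ j, ℳ i) →
        m₀ - w ∈ Q → (m₀ = 0 ∨ ∃ j', j = j' + 1 ∧ ∃ u' ∈ ℳ j', x • u' = m₀) := by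
      intro j m₀ w hm₀ hw hmw
      obtain ⟨sw, cw, hcw, hcws, hcwP, rfl⟩ := internal_decomp_iSup ℳ (· ≠ j) w hw
      obtain ⟨u, hu⟩ := hmw
      rw [hTapp] at hu
      obtain ⟨su, cu, hcu, hcus, husum⟩ := internal_decomp ℳ hM u
      set xc : ℕ → M := fun t => Nat.rec 0 (fun t' _ => x • cu t') t with hxc
      set g : ℕ → M := fun t => (if t = j then m₀ else 0) - cw t - xc t with hg
      set sall : Finset ℕ := insert j (sw ∪ su.image Nat.succ) with hsall
      have hgz : ∀ t, g t = 0 := by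
        apply internal_unique ℳ hM g sall
        · intro t
          refine Submodule.sub_mem _ (Submodule.sub_mem _ ?_ (hcw t)) ?_
          · split_ifs with h
            · subst h; exact hm₀
            · exact Submodule.zero_mem _
          · cases t with
            | zero => exact Submodule.zero_mem _
            | succ t' => exact hxmem t' _ (hcu t')
        · intro t ht
          rw [hsall, Finset.mem_insert, Finset.mem_union, not_or, not_or] at ht
          obtain ⟨ht1, ht2, ht3⟩ := ht
          rw [hg]
          dsimp only
          rw [if_neg ht1, hcws t ht2]
          have hxct : xc t = 0 := by
            cases t with
            | zero => rfl
            | succ t' =>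
              have : t' ∉ su := fun h => ht3 (Finset.mem_image_of_mem _ h)
              show x • cu t' = 0
              rw [hcus t' this, smul_zero]
          rw [hxct]
          simp
        · rw [hg]
          dsimp only
          rw [Finset.sum_sub_distrib, Finset.sum_sub_distrib]
          have e1 : ∑ t ∈ sall, (if t = j then m₀ else 0) = m₀ := by
            rw [Finset.sum_ite_eq' sall j (fun _ => m₀), if_pos (Finset.mem_insert_self _ _)]
          have e2 : ∑ t ∈ sall, cw t = ∑ t ∈ sw, cw t := by
            refine (Finset.sum_subset ?_ (fun t _ ht => hcws t ht)).symm
            rw [hsall]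
            intro t ht
            exact Finset.mem_insert_of_mem (Finset.mem_union_left _ ht)
          have e3 : ∑ t ∈ sall, xc t = x • u := by
            have h1 : ∑ t ∈ su.image Nat.succ, xc t = x • u := by
              rw [Finset.sum_image (fun a _ b _ h => Nat.succ_injective h)]
              show ∑ t ∈ su, x • cu t = x • u
              rw [← Finset.smul_sum, ← husum]
            rw [← h1]
            refine (Finset.sum_subset ?_ ?_).symm
            · rw [hsall]
              intro t ht
              exact Finset.mem_insert_of_mem (Finset.mem_union_right _ ht)
            · intro t _ ht
              cases t with
              | zero => rfl
              | succ t' =>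
                have : t' ∉ su := fun h => ht (Finset.mem_image_of_mem _ h)
                show x • cu t' = 0
                rw [hcus t' this, smul_zero]
          rw [e1, e2, e3, hu]
          abel
      have := hgz j
      rw [hg] at this
      dsimp only at this
      rw [if_pos rfl, hcwP j (by simp)] at this
      cases j with
      | zero =>
        left
        have : m₀ - 0 - 0 = 0 := this
        simpa using this
      | succ j' =>
        right
        refine ⟨j', rfl, cu j', hcu j', ?_⟩
        have h2 : m₀ - 0 - x • cu j' = 0 := this
        rw [sub_zero, sub_eq_zero] at h2
        exact h2.symm
    -- C is internally graded
    have hCint : DirectSum.IsInternal 𝒞 := by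
      rw [DirectSum.isInternal_submodule_iff_iSupIndep_and_iSup_eq_top]
      constructor
      · intro j
        rw [disjoint_iff_inf_le]
        rintro v ⟨hv1, hv2⟩
        obtain ⟨m₀, hm₀, rfl⟩ := hv1
        have hv2' : (⨆ i, ⨆ _ : i ≠ j, 𝒞 i) ≤
            Submodule.map ρ0 (⨆ i, ⨆ _ : i ≠ j, ℳ i) := by
          refine iSup_le (fun i => iSup_le (fun hij => ?_))
          rintro y ⟨m₁, hm₁, rfl⟩
          exact ⟨m₁, Submodule.mem_iSup_of_mem i
            (by rw [iSup_pos hij]; exact hm₁), rfl⟩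
        obtain ⟨w, hw, hww⟩ := hv2' hv2
        have hmw : m₀ - w ∈ Q := by
          rw [← hρ0ker, map_sub, hww, sub_self]
        rw [Submodule.mem_bot]
        rcases hQpiece j m₀ w hm₀ hw hmw with h0 | ⟨j', rfl, u', _, hu'⟩
        · rw [h0, map_zero]
        · rw [← hu', hρ0ker]
          exact ⟨u', rfl⟩
      · rw [eq_top_iff]
        intro v _
        obtain ⟨m, rfl⟩ := hρ0surj v
        obtain ⟨s, c, hc, _, rfl⟩ := internal_decomp ℳ hM m
        rw [map_sum]
        exact Submodule.sum_mem _ (fun t _ =>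
          Submodule.mem_iSup_of_mem t ⟨c t, hc t, rfl⟩)
    have hsmulC : ∀ (i j : ℕ) (r : MvPolynomial (Fin n) k) (v : M ⧸ Q),
        r.IsHomogeneous i → v ∈ 𝒞 j → r • v ∈ 𝒞 (i + j) := by
      intro i j r v hr hv
      obtain ⟨m₀, hm₀, rfl⟩ := hv
      rw [hCsmul]
      refine ⟨(rename Fin.succ r : MvPolynomial (Fin (n+1)) k) • m₀,
        hsmul i j _ _ (hr.rename_isHomogeneous) hm₀, ?_⟩
      rw [hρ0]
      exact (Submodule.Quotient.mk_smul Q _ _)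
    obtain ⟨pC, NC, hpC⟩ := IH (M ⧸ Q) 𝒞 hCint hsmulC
    ---------------------------------------------------------------
    -- rank bookkeeping
    ---------------------------------------------------------------
    have hrank : ∀ j : ℕ, (Module.finrank k (ℳ (j+1)) : ℚ) - Module.finrank k (ℳ j)
        = (Module.finrank k (𝒞 (j+1)) : ℚ) - Module.finrank k (𝒦 j) := by
      intro j
      -- the multiplication map t j
      set tj : ℳ j →ₗ[k] ℳ (j+1) := LinearMap.mk
        (AddHom.mk (fun m => ⟨x • (m : M), hxmem j _ m.2⟩)
          (fun m₁ m₂ => Subtype.ext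
            (show x • ((m₁ : M) + (m₂ : M)) = x • (m₁ : M) + x • (m₂ : M) from
              smul_add _ _ _)))
        (fun a m => Subtype.ext
          (show x • (a • (m : M)) = a • (x • (m : M)) from smul_comm _ _ _)) with htj
      -- kernel of tj ≃ 𝒦 j
      set κ : ↥(𝒦 j) →ₗ[k] ↥(LinearMap.ker tj) := LinearMap.mk
        (AddHom.mk
          (fun v => ⟨⟨((v : K) : M), v.2⟩,
            LinearMap.mem_ker.mpr (Subtype.ext
              (show x • ((v : K) : M) = (0 : M) from (v : K).2))⟩)
          (fun v₁ v₂ => Subtype.ext (Subtype.ext rfl)))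
        (fun a v => Subtype.ext (Subtype.ext rfl)) with hκ
      have hκbij : Function.Bijective κ := by
        constructor
        · intro v₁ v₂ h
          apply Subtype.ext
          apply Subtype.ext
          exact congrArg (fun w : ↥(LinearMap.ker tj) => ((w : ℳ j) : M)) h
        · rintro ⟨⟨m, hm⟩, hker⟩
          have hmK : m ∈ K := by
            show T m = 0
            rw [hTapp]
            exact congrArg Subtype.val (LinearMap.mem_ker.mp hker)
          exact ⟨⟨⟨m, hmK⟩, hm⟩, rfl⟩
      have hkerK : Module.finrank k (𝒦 j) = Module.finrank k (LinearMap.ker tj) :=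
        LinearEquiv.finrank_eq (LinearEquiv.ofBijective κ hκbij)
      -- surjection ℳ (j+1) → 𝒞 (j+1)
      set ρj : ℳ (j+1) →ₗ[k] 𝒞 (j+1) :=
        LinearMap.codRestrict (𝒞 (j+1)) (ρ0.comp (ℳ (j+1)).subtype)
          (fun m => ⟨(m : M), m.2, rfl⟩) with hρj
      have hρjsurj : Function.Surjective ρj := by
        rintro ⟨y, m₀, hm₀, rfl⟩
        exact ⟨⟨m₀, hm₀⟩, rfl⟩
      have hρjker : LinearMap.ker ρj = LinearMap.range tj := by
        ext m
        rw [LinearMap.mem_ker, LinearMap.mem_range]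
        constructor
        · intro hm
          have hmQ : (m : M) ∈ Q := by
            rw [← hρ0ker]
            exact congrArg Subtype.val hm
          have := hQpiece (j+1) (m : M) 0 m.2 (Submodule.zero_mem _)
            (by rwa [sub_zero])
          rcases this with h0 | ⟨j', hj', u', hu', hxu⟩
          · refine ⟨0, ?_⟩
            rw [map_zero]
            apply Subtype.ext
            rw [h0]
            rfl
          · have hjj : j' = j := by omega
            subst hjj
            exact ⟨⟨u', hu'⟩, Subtype.ext hxu⟩
        · rintro ⟨u, rfl⟩
          apply Subtype.ext
          show ρ0 (x • (u : M)) = 0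
          rw [hρ0ker]
          exact ⟨(u : M), rfl⟩
      haveI := hfd j
      haveI := hfd (j+1)
      have hrn1 := LinearMap.finrank_range_add_finrank_ker tj
      have hrn2 := LinearMap.finrank_range_add_finrank_ker ρj
      have hρjrange : LinearMap.range ρj = ⊤ := LinearMap.range_eq_top.mpr hρjsurj
      rw [hρjrange, finrank_top, hρjker] at hrn2
      -- hrn2 : finrank (𝒞 (j+1)) + finrank (range tj) = finrank (ℳ (j+1))
      rw [hkerK]
      have h1 : (Module.finrank k (LinearMap.range tj) : ℚ)
          + Module.finrank k (LinearMap.ker tj) = Module.finrank k (ℳ j) := by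
        exact_mod_cast congrArg (fun z : ℕ => (z : ℚ)) hrn1
      have h2 : (Module.finrank k (𝒞 (j+1)) : ℚ)
          + Module.finrank k (LinearMap.range tj) = Module.finrank k (ℳ (j+1)) := by
        exact_mod_cast congrArg (fun z : ℕ => (z : ℚ)) hrn2
      linarith
    ---------------------------------------------------------------
    -- conclude by summation
    ---------------------------------------------------------------
    have hΔ : ∀ j ≥ max NK NC, ((Module.finrank k (ℳ (j+1)) : ℚ))
        - (Module.finrank k (ℳ j) : ℚ)
        = Polynomial.eval (j : ℚ) ((pC.comp (Polynomial.X + 1)) - pK) := by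
      intro j hj
      rw [hrank j, Polynomial.eval_sub, Polynomial.eval_comp, Polynomial.eval_add,
        Polynomial.eval_X, Polynomial.eval_one, hpK j (by omega)]
      have hC := hpC (j+1) (by omega)
      push_cast at hC
      rw [hC]
    obtain ⟨q, N', hq⟩ := hilb_sum (fun j => (Module.finrank k (ℳ j) : ℚ))
      ((pC.comp (Polynomial.X + 1)) - pK) (max NK NC) hΔ
    exact ⟨q, N', hq⟩


/-- existence of the Hilbert polynomial: for a finitely generated
graded module `M` over the standardly graded `S = k[x_0,…,x_n]`, there is a
polynomial `p ∈ ℚ[m]` and a bound `N` with `dim_k M_j = p(j)` for all `j ≥ N`. -/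
theorem exists_hilbert_polynomial (k : Type*) [Field k] (n : ℕ)
    (M : Type*) [AddCommGroup M] [Module (MvPolynomial (Fin (n + 1)) k) M]
    [Module k M] [IsScalarTower k (MvPolynomial (Fin (n + 1)) k) M]
    [Module.Finite (MvPolynomial (Fin (n + 1)) k) M]
    (ℳ : ℕ → Submodule k M) [DirectSum.Decomposition ℳ]
    (hsmul : ∀ (i j : ℕ) (s : MvPolynomial (Fin (n + 1)) k) (m : M),
      s.IsHomogeneous i → m ∈ ℳ j → s • m ∈ ℳ (i + j)) :
    ∃ (p : Polynomial ℚ) (N : ℕ), ∀ j ≥ N,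
      (Module.finrank k (ℳ j) : ℚ) = p.eval (j : ℚ) := by
  exact hilb_aux k (n + 1) M ℳ (DirectSum.Decomposition.isInternal ℳ) hsmul
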